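/- Let (X,≤X), (Y,≤Y), (U,≤U) be posets, let C ⊆ X and D ⊆ Y be nonempty chain-complete subsets, let T : C × D → U, F : C → 2^D∖{∅}, G : D → 2^C∖{∅}, and let φ, ψ be the order-optimization mappings of (T,F,G). Suppose φ and ψ have nonempty values, are order-increasing upward, and φ(x) is universally inductive in D for every x ∈ C while ψ(y) is universally inductive in C for every y ∈ D. If there exist (x',y') ∈ C × D, u' ∈ φ(x') and z' ∈ ψ(y') with x' ≤X z' and y' ≤Y u', then the solution set S(T,F,G) is a nonempty inductive subset of C × D with the componentwise order, and ROEP(T,F,G) has a maximal solution (a maximal element of S(T,F,G)). -/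

import Mathlib

/-- A subset `A` of a preorder is *inductive*: every nonempty chain contained in `A`
has an upper bound belonging to `A`. -/
def IsInductiveSet {α : Type*} [Preorder α] (A : Set α) : Prop :=
  ∀ c : Set α, c ⊆ A → c.Nonempty → IsChain (· ≤ ·) c → ∃ b ∈ A, ∀ x ∈ c, x ≤ b

/-- Dual notion: every nonempty chain contained in `A` has a lower bound belonging to `A`. -/
def IsCoinductiveSet {α : Type*} [Preorder α] (A : Set α) : Prop :=
  ∀ c : Set α, c ⊆ A → c.Nonempty → IsChain (· ≤ ·) c → ∃ b ∈ A, ∀ x ∈ c, b ≤ x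

/-- `A` is *universally inductive in `P`*: every nonempty chain contained in `P`, each of
whose elements is bounded above by some element of `A`, has an upper bound belonging to `A`. -/
def IsUnivInductiveIn {α : Type*} [Preorder α] (P A : Set α) : Prop :=
  ∀ c : Set α, c ⊆ P → c.Nonempty → IsChain (· ≤ ·) c →
    (∀ x ∈ c, ∃ a ∈ A, x ≤ a) → ∃ b ∈ A, ∀ x ∈ c, x ≤ b

/-- Dual notion of universal inductivity (in the order-dual of `P`). -/
def IsUnivCoinductiveIn {α : Type*} [Preorder α] (P A : Set α) : Prop :=
  ∀ c : Set α, c ⊆ P → c.Nonempty → IsChain (· ≤ ·) c →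
    (∀ x ∈ c, ∃ a ∈ A, a ≤ x) → ∃ b ∈ A, ∀ x ∈ c, b ≤ x

/-- `A` is a *chain-complete subset*: every nonempty chain contained in `A` has a
least upper bound in the ambient poset, and this least upper bound belongs to `A`. -/
def IsChainCompleteIn {α : Type*} [Preorder α] (A : Set α) : Prop :=
  ∀ c : Set α, c ⊆ A → c.Nonempty → IsChain (· ≤ ·) c → ∃ b ∈ A, IsLUB c b

/-- A set-valued map `F` with domain `C` is *order-increasing upward*. -/
def IncUpwardOn {α β : Type*} [Preorder α] [Preorder β] (C : Set α) (F : α → Set β) : Prop :=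
  ∀ ⦃x₁⦄, x₁ ∈ C → ∀ ⦃x₂⦄, x₂ ∈ C → x₁ ≤ x₂ → ∀ z ∈ F x₁, ∃ w ∈ F x₂, z ≤ w

/-- A set-valued map `F` with domain `C` is *order-increasing downward*. -/
def IncDownwardOn {α β : Type*} [Preorder α] [Preorder β] (C : Set α) (F : α → Set β) : Prop :=
  ∀ ⦃x₁⦄, x₁ ∈ C → ∀ ⦃x₂⦄, x₂ ∈ C → x₁ ≤ x₂ → ∀ w ∈ F x₂, ∃ z ∈ F x₁, z ≤ w

/-- The order-optimization mapping `φ` of the data `(T, F)`: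
`φ(x) = {y ∈ F(x) : T(x,y) is a minimal element of {T(x,y') : y' ∈ F(x)}}`. -/
def ooPhi {X Y U : Type*} [Preorder U] (T : X → Y → U) (F : X → Set Y) (x : X) : Set Y :=
  {y ∈ F x | Minimal (· ∈ (fun y' => T x y') '' F x) (T x y)}

/-- The order-optimization mapping `ψ` of the data `(T, G)`:
`ψ(y) = {x ∈ G(y) : T(x,y) is a maximal element of {T(x',y) : x' ∈ G(y)}}`. -/
def ooPsi {X Y U : Type*} [Preorder U] (T : X → Y → U) (G : Y → Set X) (y : Y) : Set X :=
  {x ∈ G y | Maximal (· ∈ (fun x' => T x' y) '' G y) (T x y)}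

/-- The solution set `S(T,F,G)` of the constrained ordered equilibrium problem
`ROEP(T,F,G)`, as a subset of `C × D` with the componentwise order. -/
def SolSet {X Y U : Type*} [Preorder U] (T : X → Y → U) (F : X → Set Y) (G : Y → Set X)
    (C : Set X) (D : Set Y) : Set (X × Y) :=
  {p | p.1 ∈ C ∧ p.2 ∈ D ∧ p.1 ∈ G p.2 ∧ p.2 ∈ F p.1 ∧
    Maximal (· ∈ (fun x' => T x' p.2) '' G p.2) (T p.1 p.2) ∧
    Minimal (· ∈ (fun y' => T p.1 y') '' F p.1) (T p.1 p.2)}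

section AB
variable {α : Type*} [PartialOrder α]

theorem AB_chainBound (P : Set α) (Φ : α → Set α)
    (hP : IsChainCompleteIn P)
    (hInc : ∀ ⦃p₁⦄, p₁ ∈ P → ∀ ⦃p₂⦄, p₂ ∈ P → p₁ ≤ p₂ → ∀ z ∈ Φ p₁, ∃ w ∈ Φ p₂, z ≤ w)
    (hUI : ∀ p ∈ P, IsUnivInductiveIn P (Φ p))
    (c : Set α) (hcA : c ⊆ {p ∈ P | ∃ q ∈ Φ p, p ≤ q}) (hcne : c.Nonempty)
    (hchain : IsChain (· ≤ ·) c) :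
    ∃ b ∈ {p ∈ P | ∃ q ∈ Φ p, p ≤ q}, ∀ x ∈ c, x ≤ b := by
  obtain ⟨b, hbP, hlub⟩ := hP c (fun x hx => (hcA hx).1) hcne hchain
  have hbd : ∀ x ∈ c, ∃ w ∈ Φ b, x ≤ w := by
    intro x hx
    obtain ⟨hxP, q, hqΦ, hxq⟩ := hcA hx
    obtain ⟨w, hw, hqw⟩ := hInc hxP hbP (hlub.1 hx) q hqΦ
    exact ⟨w, hw, hxq.trans hqw⟩
  obtain ⟨w, hwΦ, hwub⟩ := hUI b hbP c (fun x hx => (hcA hx).1) hcne hchain hbd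
  exact ⟨b, ⟨hbP, w, hwΦ, hlub.2 (fun x hx => hwub x hx)⟩, fun x hx => hlub.1 hx⟩

theorem AB_main (P : Set α) (Φ : α → Set α)
    (hsub : ∀ p ∈ P, Φ p ⊆ P)
    (hP : IsChainCompleteIn P)
    (hInc : ∀ ⦃p₁⦄, p₁ ∈ P → ∀ ⦃p₂⦄, p₂ ∈ P → p₁ ≤ p₂ → ∀ z ∈ Φ p₁, ∃ w ∈ Φ p₂, z ≤ w)
    (hUI : ∀ p ∈ P, IsUnivInductiveIn P (Φ p))
    (a : α) (ha : a ∈ P) (q₀ : α) (hq₀ : q₀ ∈ Φ a) (haq : a ≤ q₀) :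
    ∃ m, a ≤ m ∧ Maximal (· ∈ {p ∈ P | p ∈ Φ p}) m := by
  set A : Set α := {p ∈ P | ∃ q ∈ Φ p, p ≤ q} with hA
  have haA : a ∈ A := ⟨ha, q₀, hq₀, haq⟩
  obtain ⟨m, ham, hmax⟩ := zorn_le_nonempty₀ A
    (fun c hcA hc y hy =>
      AB_chainBound P Φ hP hInc hUI c hcA ⟨y, hy⟩ hc) a haA
  obtain ⟨hmP, q, hqΦ, hmq⟩ := hmax.1
  have hqP : q ∈ P := hsub m hmP hqΦ
  obtain ⟨r, hrΦ, hqr⟩ := hInc hmP hqP hmq q hqΦ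
  have hqA : q ∈ A := ⟨hqP, r, hrΦ, hqr⟩
  have hmfix : m = q := le_antisymm hmq (hmax.2 hqA hmq)
  subst hmfix
  refine ⟨m, ham, ⟨⟨hmP, hqΦ⟩, ?_⟩⟩
  intro n hn hmn
  exact hmax.2 ⟨hn.1, n, hn.2, le_refl n⟩ hmn

end AB

/-- Theorem 3.1. -/
theorem ROEP_solvable {X Y U : Type*} [PartialOrder X] [PartialOrder Y] [PartialOrder U]
    (C : Set X) (D : Set Y) (hCne : C.Nonempty) (hDne : D.Nonempty)
    (T : X → Y → U) (F : X → Set Y) (G : Y → Set X)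
    (hF : ∀ x ∈ C, (F x).Nonempty ∧ F x ⊆ D)
    (hG : ∀ y ∈ D, (G y).Nonempty ∧ G y ⊆ C)
    (hCcc : IsChainCompleteIn C) (hDcc : IsChainCompleteIn D)
    (hphiNe : ∀ x ∈ C, (ooPhi T F x).Nonempty)
    (hpsiNe : ∀ y ∈ D, (ooPsi T G y).Nonempty)
    (hphiInc : IncUpwardOn C (ooPhi T F))
    (hpsiInc : IncUpwardOn D (ooPsi T G))
    (hphiUI : ∀ x ∈ C, IsUnivInductiveIn D (ooPhi T F x))
    (hpsiUI : ∀ y ∈ D, IsUnivInductiveIn C (ooPsi T G y))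
    (x' : X) (y' : Y) (hx' : x' ∈ C) (hy' : y' ∈ D)
    (u' : Y) (hu' : u' ∈ ooPhi T F x') (z' : X) (hz' : z' ∈ ooPsi T G y')
    (hx'z' : x' ≤ z') (hy'u' : y' ≤ u') :
    (SolSet T F G C D).Nonempty ∧ IsInductiveSet (SolSet T F G C D) ∧
      ∃ p : X × Y, Maximal (· ∈ SolSet T F G C D) p := by
  classical
  set P : Set (X × Y) := C ×ˢ D with hPdef
  set Φ : X × Y → Set (X × Y) := fun p => (ooPsi T G p.2) ×ˢ (ooPhi T F p.1) with hΦdef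
  have hpsiSub : ∀ y ∈ D, ooPsi T G y ⊆ C := fun y hy x hx => (hG y hy).2 hx.1
  have hphiSub : ∀ x ∈ C, ooPhi T F x ⊆ D := fun x hx y hy => (hF x hx).2 hy.1
  have hsub : ∀ p ∈ P, Φ p ⊆ P := by
    rintro ⟨x, y⟩ ⟨hx, hy⟩ ⟨z, u⟩ ⟨hz, hu⟩
    exact ⟨hpsiSub y hy hz, hphiSub x hx hu⟩
  have hPcc : IsChainCompleteIn P := by
    intro c hcP hcne hchain
    have hc1 : IsChain (· ≤ ·) (Prod.fst '' c) :=
      hchain.image_of_map_rel _ _ _ (fun _ _ h => h.1)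
    have hc2 : IsChain (· ≤ ·) (Prod.snd '' c) :=
      hchain.image_of_map_rel _ _ _ (fun _ _ h => h.2)
    obtain ⟨b₁, hb₁C, hb₁⟩ := hCcc (Prod.fst '' c)
      (by rintro _ ⟨p, hp, rfl⟩; exact (hcP hp).1) (hcne.image _) hc1
    obtain ⟨b₂, hb₂D, hb₂⟩ := hDcc (Prod.snd '' c)
      (by rintro _ ⟨p, hp, rfl⟩; exact (hcP hp).2) (hcne.image _) hc2
    exact ⟨(b₁, b₂), ⟨hb₁C, hb₂D⟩, (isLUB_prod (p := (b₁, b₂))).2 ⟨hb₁, hb₂⟩⟩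
  have hInc : ∀ ⦃p₁⦄, p₁ ∈ P → ∀ ⦃p₂⦄, p₂ ∈ P → p₁ ≤ p₂ → ∀ z ∈ Φ p₁, ∃ w ∈ Φ p₂, z ≤ w := by
    rintro ⟨x₁, y₁⟩ ⟨hx₁, hy₁⟩ ⟨x₂, y₂⟩ ⟨hx₂, hy₂⟩ ⟨hle1, hle2⟩ ⟨z, u⟩ ⟨hz, hu⟩
    obtain ⟨w₁, hw₁, hzw₁⟩ := hpsiInc hy₁ hy₂ hle2 z hz
    obtain ⟨w₂, hw₂, huw₂⟩ := hphiInc hx₁ hx₂ hle1 u hu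
    exact ⟨(w₁, w₂), ⟨hw₁, hw₂⟩, hzw₁, huw₂⟩
  have hUI : ∀ p ∈ P, IsUnivInductiveIn P (Φ p) := by
    rintro ⟨x, y⟩ ⟨hx, hy⟩ c hcP hcne hchain hbd
    have hc1 : IsChain (· ≤ ·) (Prod.fst '' c) :=
      hchain.image_of_map_rel _ _ _ (fun _ _ h => h.1)
    have hc2 : IsChain (· ≤ ·) (Prod.snd '' c) :=
      hchain.image_of_map_rel _ _ _ (fun _ _ h => h.2)
    obtain ⟨w₁, hw₁, hub₁⟩ := hpsiUI y hy (Prod.fst '' c)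
      (by rintro _ ⟨p, hp, rfl⟩; exact (hcP hp).1) (hcne.image _) hc1
      (by rintro _ ⟨p, hp, rfl⟩
          obtain ⟨a, ⟨ha1, ha2⟩, hpa⟩ := hbd p hp
          exact ⟨a.1, ha1, hpa.1⟩)
    obtain ⟨w₂, hw₂, hub₂⟩ := hphiUI x hx (Prod.snd '' c)
      (by rintro _ ⟨p, hp, rfl⟩; exact (hcP hp).2) (hcne.image _) hc2
      (by rintro _ ⟨p, hp, rfl⟩
          obtain ⟨a, ⟨ha1, ha2⟩, hpa⟩ := hbd p hp
          exact ⟨a.2, ha2, hpa.2⟩)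
    exact ⟨(w₁, w₂), ⟨hw₁, hw₂⟩,
      fun p hp => ⟨hub₁ p.1 ⟨p, hp, rfl⟩, hub₂ p.2 ⟨p, hp, rfl⟩⟩⟩
  have hSol : SolSet T F G C D = {p ∈ P | p ∈ Φ p} := by
    ext ⟨x, y⟩
    constructor
    · rintro ⟨h1, h2, h3, h4, h5, h6⟩
      exact ⟨⟨h1, h2⟩, ⟨h3, h5⟩, ⟨h4, h6⟩⟩
    · rintro ⟨⟨h1, h2⟩, ⟨h3, h5⟩, ⟨h4, h6⟩⟩
      exact ⟨h1, h2, h3, h4, h5, h6⟩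
  have haP : (x', y') ∈ P := ⟨hx', hy'⟩
  have hq₀ : (z', u') ∈ Φ (x', y') := ⟨hz', hu'⟩
  have haq : (x', y') ≤ (z', u') := ⟨hx'z', hy'u'⟩
  obtain ⟨m, _, hmmax⟩ := AB_main P Φ hsub hPcc hInc hUI _ haP _ hq₀ haq
  rw [hSol]
  refine ⟨⟨m, hmmax.1⟩, ?_, ⟨m, hmmax⟩⟩
  intro c hcFix hcne hchain
  have hcA : c ⊆ {p ∈ P | ∃ q ∈ Φ p, p ≤ q} := by
    intro p hp
    exact ⟨(hcFix hp).1, p, (hcFix hp).2, le_refl p⟩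
  obtain ⟨b, hbA, hbub⟩ := AB_chainBound P Φ hPcc hInc hUI c hcA hcne hchain
  obtain ⟨hbP, q, hqΦ, hbq⟩ := hbA
  obtain ⟨n, hbn, hnmax⟩ := AB_main P Φ hsub hPcc hInc hUI b hbP q hqΦ hbq
  exact ⟨n, hnmax.1, fun p hp => (hbub p hp).trans hbn⟩
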